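/- Let A, B be two antisymmetric 2n × 2n matrices over ℝ. Then Pf A − Pf B can be written as a telescoping sum over pairs (i,j) with 1 ≤ i < j ≤ 2n of terms, where each term is bounded in absolute value by |A_{i,j} − B_{i,j}| times the absolute value of the Pfaffian of a suitable antisymmetric (2n−2) × (2n−2) matrix obtained by deleting rows and columns i and j from a matrix whose entries above the diagonal agree with A for indices lexicographically before (i,j) and with B afterwards. In particular, |Pf A − Pf B| ≤ ∑_{i<j} |A_{i,j} − B_{i,j}| · |Pf(M^{(i,j)}_{ĵî})| for the interpolating matrices M^{(i,j)}. -/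

import Mathlib

open Matrix

/-- The Pfaffian of a `2n × 2n` real matrix. -/
noncomputable def pfaffian {n : ℕ} (A : Matrix (Fin (2 * n)) (Fin (2 * n)) ℝ) : ℝ :=
  (1 / (2 ^ n * (n.factorial : ℝ))) *
    ∑ π : Equiv.Perm (Fin (2 * n)),
      ((Equiv.Perm.sign π : ℤ) : ℝ) *
        ∏ i : Fin n,
          A (π ⟨2 * (i : ℕ), by have := i.isLt; omega⟩)
            (π ⟨2 * (i : ℕ) + 1, by have := i.isLt; omega⟩)

/-- The interpolating antisymmetric matrix `M^{(i,j)}`: its above-diagonal entries with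
index lexicographically `≤ (i,j)` agree with `A`, the remaining above-diagonal entries
agree with `B`, and it is antisymmetric with zero diagonal. -/
def interp {m : ℕ} (A B : Matrix (Fin m) (Fin m) ℝ) (i j : Fin m) :
    Matrix (Fin m) (Fin m) ℝ := fun k l =>
  if k < l then (if k < i ∨ (k = i ∧ l ≤ j) then A k l else B k l)
  else if l < k then -(if l < i ∨ (l = i ∧ k ≤ j) then A l k else B l k)
  else 0

theorem card_pair_compl {n : ℕ} {i j : Fin (2 * (n + 1))} (h : i ≠ j) :
    ({i, j}ᶜ : Finset (Fin (2 * (n + 1)))).card = 2 * n := by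
  rw [Finset.card_compl, Finset.card_insert_of_notMem (by simpa using h),
    Finset.card_singleton]
  simp only [Fintype.card_fin]
  omega

/-- The Pfaffian of the `(2n-2) × (2n-2)` matrix obtained from a `2n × 2n` matrix by
deleting rows and columns `i` and `j`. -/
noncomputable def pfMinor {n : ℕ}
    (M : Matrix (Fin (2 * (n + 1))) (Fin (2 * (n + 1))) ℝ)
    (i j : Fin (2 * (n + 1))) (h : i ≠ j) : ℝ :=
  pfaffian (Matrix.of fun a b : Fin (2 * n) =>
    M (({i, j}ᶜ : Finset (Fin (2 * (n + 1)))).orderEmbOfFin (card_pair_compl h) a)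
      (({i, j}ᶜ : Finset (Fin (2 * (n + 1)))).orderEmbOfFin (card_pair_compl h) b))

namespace PfTele

/-- position `2l` -/
def pA {k : ℕ} (l : Fin k) : Fin (2 * k) := ⟨2 * (l : ℕ), by have := l.isLt; omega⟩
/-- position `2l+1` -/
def pB {k : ℕ} (l : Fin k) : Fin (2 * k) := ⟨2 * (l : ℕ) + 1, by have := l.isLt; omega⟩

lemma pfaffian_eq {k : ℕ} (A : Matrix (Fin (2 * k)) (Fin (2 * k)) ℝ) :
    pfaffian A = (1 / (2 ^ k * (k.factorial : ℝ))) *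
      ∑ π : Equiv.Perm (Fin (2 * k)), ((Equiv.Perm.sign π : ℤ) : ℝ) *
        ∏ l : Fin k, A (π (pA l)) (π (pB l)) := rfl

variable {n : ℕ}

/-- matrix with entry `x` at `(i,j)`, `-x` at `(j,i)`, agreeing with `M'` elsewhere. -/
def Nmat (M' : Matrix (Fin (2 * (n + 1))) (Fin (2 * (n + 1))) ℝ)
    (i j : Fin (2 * (n + 1))) (x : ℝ) : Matrix (Fin (2 * (n + 1))) (Fin (2 * (n + 1))) ℝ :=
  fun k l => if k = i ∧ l = j then x else if k = j ∧ l = i then -x else M' k l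

lemma Nmat_ij (M') (i j : Fin (2 * (n + 1))) (x : ℝ) : Nmat M' i j x i j = x := by
  simp [Nmat]

lemma Nmat_ji (M') {i j : Fin (2 * (n + 1))} (hij : i ≠ j) (x : ℝ) :
    Nmat M' i j x j i = -x := by
  simp [Nmat, hij, hij.symm]

lemma Nmat_other (M') {i j : Fin (2 * (n + 1))} {k l : Fin (2 * (n + 1))}
    (h1 : ¬(k = i ∧ l = j)) (h2 : ¬(k = j ∧ l = i)) (x : ℝ) :
    Nmat M' i j x k l = M' k l := by
  simp [Nmat, h1, h2]

lemma prod_affine (M' : Matrix (Fin (2 * (n + 1))) (Fin (2 * (n + 1))) ℝ)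
    {i j : Fin (2 * (n + 1))} (hij : i ≠ j) (π : Equiv.Perm (Fin (2 * (n + 1)))) (x : ℝ) :
    (∏ l : Fin (n + 1), Nmat M' i j x (π (pA l)) (π (pB l))) =
      (∏ l : Fin (n + 1), Nmat M' i j 0 (π (pA l)) (π (pB l))) +
        x * ((∏ l : Fin (n + 1), Nmat M' i j 1 (π (pA l)) (π (pB l))) -
          (∏ l : Fin (n + 1), Nmat M' i j 0 (π (pA l)) (π (pB l)))) := by
  by_cases h : ∃ l : Fin (n + 1),
      (π (pA l) = i ∧ π (pB l) = j) ∨ (π (pA l) = j ∧ π (pB l) = i)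
  · obtain ⟨l₀, h₀⟩ := h
    have hother : ∀ l : Fin (n + 1), l ≠ l₀ →
        (¬(π (pA l) = i ∧ π (pB l) = j)) ∧ (¬(π (pA l) = j ∧ π (pB l) = i)) := by
      intro l hl
      have hv : (l : ℕ) ≠ (l₀ : ℕ) := fun hv => hl (Fin.ext hv)
      have hAA : pA l ≠ pA l₀ := by simp [pA, Fin.ext_iff]; omega
      have hAB : pA l ≠ pB l₀ := by simp [pA, pB, Fin.ext_iff]; omega
      have hBA : pB l ≠ pA l₀ := by simp [pA, pB, Fin.ext_iff]; omega
      have hBB : pB l ≠ pB l₀ := by simp [pA, pB, Fin.ext_iff]; omega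
      rcases h₀ with ⟨ha, hb⟩ | ⟨ha, hb⟩
      · constructor
        · rintro ⟨ha', -⟩; exact hAA (π.injective (ha'.trans ha.symm))
        · rintro ⟨-, hb'⟩; exact hBA (π.injective (hb'.trans ha.symm))
      · constructor
        · rintro ⟨-, hb'⟩; exact hBA (π.injective (hb'.trans ha.symm))
        · rintro ⟨ha', -⟩; exact hAA (π.injective (ha'.trans ha.symm))
    have key : ∀ y : ℝ, (∏ l : Fin (n + 1), Nmat M' i j y (π (pA l)) (π (pB l))) =
        y * ∏ l : Fin (n + 1), Nmat M' i j 1 (π (pA l)) (π (pB l)) := by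
      intro y
      rw [← Finset.mul_prod_erase _ _ (Finset.mem_univ l₀),
        ← Finset.mul_prod_erase _ (fun l => Nmat M' i j 1 (π (pA l)) (π (pB l)))
          (Finset.mem_univ l₀)]
      have hrest : ∀ z : ℝ, (∏ l ∈ Finset.univ.erase l₀, Nmat M' i j z (π (pA l)) (π (pB l))) =
          ∏ l ∈ Finset.univ.erase l₀, M' (π (pA l)) (π (pB l)) := by
        intro z
        refine Finset.prod_congr rfl fun l hl => ?_
        have := hother l (Finset.ne_of_mem_erase hl)
        exact Nmat_other M' this.1 this.2 z
      rw [hrest, hrest]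
      rcases h₀ with ⟨ha, hb⟩ | ⟨ha, hb⟩
      · rw [ha, hb, Nmat_ij, Nmat_ij]; ring
      · rw [ha, hb, Nmat_ji M' hij, Nmat_ji M' hij]; ring
    rw [key x, key 0, key 1]; ring
  · have heq : ∀ y : ℝ, (∏ l : Fin (n + 1), Nmat M' i j y (π (pA l)) (π (pB l))) =
        ∏ l : Fin (n + 1), M' (π (pA l)) (π (pB l)) := by
      intro y
      refine Finset.prod_congr rfl fun l _ => ?_
      exact Nmat_other M' (fun hc => h ⟨l, Or.inl hc⟩) (fun hc => h ⟨l, Or.inr hc⟩) y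
    rw [heq x, heq 0, heq 1]; ring

lemma sum_affine_helper {α : Type*} [Fintype α] (c x : ℝ) (s f g : α → ℝ) :
    c * ∑ a : α, s a * (f a + x * (g a - f a)) =
      c * (∑ a : α, s a * f a) +
        x * (c * (∑ a : α, s a * g a) - c * (∑ a : α, s a * f a)) := by
  have h1 : (∑ a : α, s a * (f a + x * (g a - f a))) =
      ∑ a : α, (s a * f a + x * (s a * g a - s a * f a)) :=
    Finset.sum_congr rfl fun a _ => by ring
  rw [h1, Finset.sum_add_distrib, ← Finset.mul_sum, Finset.sum_sub_distrib]
  ring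

lemma pf_Nmat_affine (M' : Matrix (Fin (2 * (n + 1))) (Fin (2 * (n + 1))) ℝ)
    {i j : Fin (2 * (n + 1))} (hij : i ≠ j) (x : ℝ) :
    pfaffian (Nmat M' i j x) = pfaffian (Nmat M' i j 0) +
      x * (pfaffian (Nmat M' i j 1) - pfaffian (Nmat M' i j 0)) := by
  rw [pfaffian_eq, pfaffian_eq, pfaffian_eq]
  simp only [prod_affine M' hij _ x]
  exact sum_affine_helper _ _ _ _ _

-- appended to part1 inside namespace PfTele (variable {n : ℕ})

def iota {n : ℕ} : Fin (2 * n) ↪ Fin (2 * (n + 1)) := Fin.castLEEmb (by omega)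

lemma iota_val (y : Fin (2 * n)) : ((iota y : Fin (2 * (n + 1))) : ℕ) = (y : ℕ) := rfl

def emb (i j : Fin (2 * (n + 1))) (h : i ≠ j) : Fin (2 * n) ↪o Fin (2 * (n + 1)) :=
  ({i, j}ᶜ : Finset (Fin (2 * (n + 1)))).orderEmbOfFin (card_pair_compl h)

lemma emb_ne_left (i j : Fin (2 * (n + 1))) (h : i ≠ j) (a : Fin (2 * n)) :
    emb i j h a ≠ i := by
  have := ({i, j}ᶜ : Finset (Fin (2 * (n + 1)))).orderEmbOfFin_mem (card_pair_compl h) a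
  simp only [Finset.mem_compl, Finset.mem_insert, Finset.mem_singleton] at this
  exact fun hc => this (Or.inl hc)

lemma emb_ne_right (i j : Fin (2 * (n + 1))) (h : i ≠ j) (a : Fin (2 * n)) :
    emb i j h a ≠ j := by
  have := ({i, j}ᶜ : Finset (Fin (2 * (n + 1)))).orderEmbOfFin_mem (card_pair_compl h) a
  simp only [Finset.mem_compl, Finset.mem_insert, Finset.mem_singleton] at this
  exact fun hc => this (Or.inr hc)

def rfun (i j : Fin (2 * (n + 1))) (h : i ≠ j) : Fin (2 * (n + 1)) → Fin (2 * (n + 1)) :=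
  fun k => if hk : (k : ℕ) < 2 * n then emb i j h ⟨k, hk⟩
    else if (k : ℕ) = 2 * n then i else j

lemma rfun_injective (i j : Fin (2 * (n + 1))) (h : i ≠ j) :
    Function.Injective (rfun i j h) := by
  intro a b hab
  unfold rfun at hab
  by_cases ha : (a : ℕ) < 2 * n <;> by_cases hb : (b : ℕ) < 2 * n
  · rw [dif_pos ha, dif_pos hb] at hab
    have := (emb i j h).injective hab
    simp only [Fin.mk.injEq] at this
    exact Fin.ext this
  · rw [dif_pos ha, dif_neg hb] at hab
    split_ifs at hab
    · exact absurd hab (emb_ne_left i j h _)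
    · exact absurd hab (emb_ne_right i j h _)
  · rw [dif_neg ha, dif_pos hb] at hab
    split_ifs at hab
    · exact absurd hab.symm (emb_ne_left i j h _)
    · exact absurd hab.symm (emb_ne_right i j h _)
  · rw [dif_neg ha, dif_neg hb] at hab
    have ha2 := a.isLt; have hb2 := b.isLt
    split_ifs at hab with h1 h2 h2
    · exact Fin.ext (by omega)
    · exact absurd hab h
    · exact absurd hab.symm h
    · exact Fin.ext (by omega)

noncomputable def rho (i j : Fin (2 * (n + 1))) (h : i ≠ j) : Equiv.Perm (Fin (2 * (n + 1))) :=
  Equiv.ofBijective (rfun i j h) (Finite.injective_iff_bijective.mp (rfun_injective i j h))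

lemma rho_apply_iota (i j : Fin (2 * (n + 1))) (h : i ≠ j) (y : Fin (2 * n)) :
    rho i j h (iota y) = emb i j h y := by
  have hy : ((iota y : Fin (2 * (n + 1))) : ℕ) < 2 * n := y.isLt
  show rfun i j h (iota y) = emb i j h y
  rw [rfun, dif_pos hy]
  congr 1

lemma rho_apply_pA_last (i j : Fin (2 * (n + 1))) (h : i ≠ j) :
    rho i j h (pA (Fin.last n)) = i := by
  show rfun i j h (pA (Fin.last n)) = i
  have : ((pA (Fin.last n) : Fin (2 * (n + 1))) : ℕ) = 2 * n := rfl
  rw [rfun, dif_neg (by omega), if_pos this]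

lemma rho_apply_pB_last (i j : Fin (2 * (n + 1))) (h : i ≠ j) :
    rho i j h (pB (Fin.last n)) = j := by
  show rfun i j h (pB (Fin.last n)) = j
  have : ((pB (Fin.last n) : Fin (2 * (n + 1))) : ℕ) = 2 * n + 1 := rfl
  rw [rfun, dif_neg (by omega), if_neg (by omega)]

def extPerm (τ : Equiv.Perm (Fin (2 * n))) : Equiv.Perm (Fin (2 * (n + 1))) :=
  τ.viaFintypeEmbedding iota

lemma extPerm_apply_iota (τ : Equiv.Perm (Fin (2 * n))) (y : Fin (2 * n)) :
    extPerm τ (iota y) = iota (τ y) :=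
  Equiv.Perm.viaFintypeEmbedding_apply_image τ iota y

lemma extPerm_apply_high (τ : Equiv.Perm (Fin (2 * n))) (z : Fin (2 * (n + 1)))
    (hz : ¬((z : ℕ) < 2 * n)) : extPerm τ z = z := by
  refine Equiv.Perm.viaFintypeEmbedding_apply_notMem_range τ iota ?_
  rintro ⟨y, rfl⟩
  exact hz y.isLt

lemma sign_extPerm (τ : Equiv.Perm (Fin (2 * n))) :
    Equiv.Perm.sign (extPerm τ) = Equiv.Perm.sign τ :=
  Equiv.Perm.viaFintypeEmbedding_sign τ iota

def sigmaPerm (l₀ : Fin (n + 1)) : Equiv.Perm (Fin (2 * (n + 1))) :=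
  Equiv.swap (pA l₀) (pA (Fin.last n)) * Equiv.swap (pB l₀) (pB (Fin.last n))

def wPerm (bb : Bool) : Equiv.Perm (Fin (2 * (n + 1))) :=
  if bb then Equiv.swap (pA (Fin.last n)) (pB (Fin.last n)) else 1

noncomputable def Theta (i j : Fin (2 * (n + 1))) (h : i ≠ j)
    (x : Equiv.Perm (Fin (2 * n)) × Fin (n + 1) × Bool) :
    Equiv.Perm (Fin (2 * (n + 1))) :=
  rho i j h * extPerm x.1 * wPerm x.2.2 * sigmaPerm x.2.1

lemma pA_ne_pB {k : ℕ} (l l' : Fin k) : (pA l : Fin (2 * k)) ≠ pB l' := by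
  simp only [pA, pB, ne_eq, Fin.mk.injEq]
  omega

lemma pA_ne {k : ℕ} {l l' : Fin k} (h : l ≠ l') : (pA l : Fin (2 * k)) ≠ pA l' := by
  have hv : (l : ℕ) ≠ (l' : ℕ) := fun hv => h (Fin.ext hv)
  simp only [pA, ne_eq, Fin.mk.injEq]
  omega

lemma pB_ne {k : ℕ} {l l' : Fin k} (h : l ≠ l') : (pB l : Fin (2 * k)) ≠ pB l' := by
  have hv : (l : ℕ) ≠ (l' : ℕ) := fun hv => h (Fin.ext hv)
  simp only [pB, ne_eq, Fin.mk.injEq]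
  omega

lemma sigma_pA (l₀ l : Fin (n + 1)) :
    sigmaPerm l₀ (pA l) = pA (Equiv.swap l₀ (Fin.last n) l) := by
  unfold sigmaPerm
  rw [Equiv.Perm.mul_apply,
    Equiv.swap_apply_of_ne_of_ne (pA_ne_pB l l₀) (pA_ne_pB l (Fin.last n))]
  rcases eq_or_ne l l₀ with rfl | h1
  · rw [Equiv.swap_apply_left, Equiv.swap_apply_left]
  · rcases eq_or_ne l (Fin.last n) with rfl | h2
    · rw [Equiv.swap_apply_right, Equiv.swap_apply_right]
    · rw [Equiv.swap_apply_of_ne_of_ne (pA_ne h1) (pA_ne h2),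
        Equiv.swap_apply_of_ne_of_ne h1 h2]

lemma sigma_pB (l₀ l : Fin (n + 1)) :
    sigmaPerm l₀ (pB l) = pB (Equiv.swap l₀ (Fin.last n) l) := by
  unfold sigmaPerm
  rw [Equiv.Perm.mul_apply]
  have hfix : ∀ l' : Fin (n + 1),
      Equiv.swap (pA l₀) (pA (Fin.last n)) (pB l') = pB l' := fun l' =>
    Equiv.swap_apply_of_ne_of_ne (pA_ne_pB l₀ l').symm (pA_ne_pB (Fin.last n) l').symm
  rcases eq_or_ne l l₀ with rfl | h1
  · rw [Equiv.swap_apply_left, hfix, Equiv.swap_apply_left]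
  · rcases eq_or_ne l (Fin.last n) with rfl | h2
    · rw [Equiv.swap_apply_right, hfix, Equiv.swap_apply_right]
    · rw [Equiv.swap_apply_of_ne_of_ne (pB_ne h1) (pB_ne h2), hfix,
        Equiv.swap_apply_of_ne_of_ne h1 h2]

lemma w_pA_last (bb : Bool) :
    wPerm bb (pA (Fin.last n) : Fin (2 * (n + 1))) =
      if bb then pB (Fin.last n) else pA (Fin.last n) := by
  cases bb <;> simp [wPerm]

lemma w_pB_last (bb : Bool) :
    wPerm bb (pB (Fin.last n) : Fin (2 * (n + 1))) =
      if bb then pA (Fin.last n) else pB (Fin.last n) := by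
  cases bb <;> simp [wPerm, Equiv.swap_apply_right]

lemma w_fix (bb : Bool) (z : Fin (2 * (n + 1))) (h1 : z ≠ pA (Fin.last n))
    (h2 : z ≠ pB (Fin.last n)) : wPerm bb z = z := by
  cases bb <;> simp [wPerm, Equiv.swap_apply_of_ne_of_ne h1 h2]

lemma pA_last_val : ((pA (Fin.last n) : Fin (2 * (n + 1))) : ℕ) = 2 * n := rfl
lemma pB_last_val : ((pB (Fin.last n) : Fin (2 * (n + 1))) : ℕ) = 2 * n + 1 := rfl

lemma Theta_pA_l0 (i j : Fin (2 * (n + 1))) (h : i ≠ j) (τ : Equiv.Perm (Fin (2 * n)))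
    (l₀ : Fin (n + 1)) (bb : Bool) :
    Theta i j h (τ, l₀, bb) (pA l₀) = if bb then j else i := by
  simp only [Theta, Equiv.Perm.mul_apply]
  rw [sigma_pA, Equiv.swap_apply_left, w_pA_last]
  cases bb
  · simp only [if_neg Bool.false_ne_true, Bool.false_eq_true, if_false]
    rw [extPerm_apply_high _ _ (by rw [pA_last_val]; omega), rho_apply_pA_last]
  · simp only [if_true]
    rw [extPerm_apply_high _ _ (by rw [pB_last_val]; omega), rho_apply_pB_last]

lemma Theta_pB_l0 (i j : Fin (2 * (n + 1))) (h : i ≠ j) (τ : Equiv.Perm (Fin (2 * n)))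
    (l₀ : Fin (n + 1)) (bb : Bool) :
    Theta i j h (τ, l₀, bb) (pB l₀) = if bb then i else j := by
  simp only [Theta, Equiv.Perm.mul_apply]
  rw [sigma_pB, Equiv.swap_apply_left, w_pB_last]
  cases bb
  · simp only [Bool.false_eq_true, if_false]
    rw [extPerm_apply_high _ _ (by rw [pB_last_val]; omega), rho_apply_pB_last]
  · simp only [if_true]
    rw [extPerm_apply_high _ _ (by rw [pA_last_val]; omega), rho_apply_pA_last]

lemma pA_eq_iota {l : Fin (n + 1)} (hl : l ≠ Fin.last n) :
    (pA l : Fin (2 * (n + 1))) = iota (pA (l.castPred hl)) := by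
  apply Fin.ext
  rfl

lemma pB_eq_iota {l : Fin (n + 1)} (hl : l ≠ Fin.last n) :
    (pB l : Fin (2 * (n + 1))) = iota (pB (l.castPred hl)) := by
  apply Fin.ext
  rfl

lemma Theta_pA_swap (i j : Fin (2 * (n + 1))) (h : i ≠ j) (τ : Equiv.Perm (Fin (2 * n)))
    (l₀ : Fin (n + 1)) (bb : Bool) (l : Fin (n + 1)) (hl : l ≠ Fin.last n) :
    Theta i j h (τ, l₀, bb) (pA (Equiv.swap l₀ (Fin.last n) l)) =
      emb i j h (τ (pA (l.castPred hl))) := by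
  simp only [Theta, Equiv.Perm.mul_apply]
  rw [sigma_pA, Equiv.swap_apply_self]
  rw [w_fix _ _ (pA_ne hl) (pA_ne_pB l (Fin.last n))]
  rw [pA_eq_iota hl, extPerm_apply_iota, rho_apply_iota]

lemma Theta_pB_swap (i j : Fin (2 * (n + 1))) (h : i ≠ j) (τ : Equiv.Perm (Fin (2 * n)))
    (l₀ : Fin (n + 1)) (bb : Bool) (l : Fin (n + 1)) (hl : l ≠ Fin.last n) :
    Theta i j h (τ, l₀, bb) (pB (Equiv.swap l₀ (Fin.last n) l)) =
      emb i j h (τ (pB (l.castPred hl))) := by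
  simp only [Theta, Equiv.Perm.mul_apply]
  rw [sigma_pB, Equiv.swap_apply_self]
  rw [w_fix _ _ (Ne.symm (pA_ne_pB (Fin.last n) l)) (pB_ne hl)]
  rw [pB_eq_iota hl, extPerm_apply_iota, rho_apply_iota]

lemma sign_sigma (l₀ : Fin (n + 1)) : Equiv.Perm.sign (sigmaPerm l₀) = 1 := by
  unfold sigmaPerm
  rcases eq_or_ne l₀ (Fin.last n) with rfl | h
  · rw [Equiv.swap_self, Equiv.swap_self]
    simp
  · rw [_root_.map_mul, Equiv.Perm.sign_swap (pA_ne h), Equiv.Perm.sign_swap (pB_ne h)]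
    simp

lemma sign_w (bb : Bool) :
    Equiv.Perm.sign (wPerm bb : Equiv.Perm (Fin (2 * (n + 1)))) =
      if bb then -1 else 1 := by
  cases bb <;>
    simp [wPerm, Equiv.Perm.sign_swap (pA_ne_pB (Fin.last n) (Fin.last n))]

lemma sign_Theta (i j : Fin (2 * (n + 1))) (h : i ≠ j) (τ : Equiv.Perm (Fin (2 * n)))
    (l₀ : Fin (n + 1)) (bb : Bool) :
    Equiv.Perm.sign (Theta i j h (τ, l₀, bb)) =
      (if bb then -1 else 1) * (Equiv.Perm.sign (rho i j h) * Equiv.Perm.sign τ) := by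
  simp only [Theta, _root_.map_mul, sign_extPerm, sign_sigma, sign_w, mul_one]
  cases bb <;> simp <;> ring

lemma sigma_inv (l₀ : Fin (n + 1)) : (sigmaPerm l₀)⁻¹ = sigmaPerm l₀ := by
  have hdis : (Equiv.swap (pA l₀) (pA (Fin.last n)) :
      Equiv.Perm (Fin (2 * (n + 1)))).Disjoint
      (Equiv.swap (pB l₀) (pB (Fin.last n))) := by
    intro z
    by_cases h1 : z = pA l₀
    · subst h1
      exact Or.inr (Equiv.swap_apply_of_ne_of_ne (pA_ne_pB l₀ l₀) (pA_ne_pB l₀ (Fin.last n)))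
    · by_cases h2 : z = pA (Fin.last n)
      · subst h2
        exact Or.inr (Equiv.swap_apply_of_ne_of_ne (pA_ne_pB (Fin.last n) l₀)
          (pA_ne_pB (Fin.last n) (Fin.last n)))
      · exact Or.inl (Equiv.swap_apply_of_ne_of_ne h1 h2)
  unfold sigmaPerm
  rw [_root_.mul_inv_rev, Equiv.swap_inv, Equiv.swap_inv, ← hdis.commute.eq]

lemma wPerm_inv (bb : Bool) : (wPerm bb : Equiv.Perm (Fin (2 * (n + 1))))⁻¹ = wPerm bb := by
  cases bb <;> simp [wPerm]

lemma Theta_injective (i j : Fin (2 * (n + 1))) (h : i ≠ j) :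
    Function.Injective (Theta i j h) := by
  rintro ⟨τ₁, l₁, b₁⟩ ⟨τ₂, l₂, b₂⟩ heq
  have hl : l₁ = l₂ := by
    by_contra hll
    have hk : Equiv.swap l₂ (Fin.last n) l₁ ≠ Fin.last n := by
      intro hc
      apply hll
      have := congrArg (Equiv.swap l₂ (Fin.last n)) hc
      rwa [Equiv.swap_apply_self, Equiv.swap_apply_right] at this
    have h2 := Theta_pA_swap i j h τ₂ l₂ b₂ (Equiv.swap l₂ (Fin.last n) l₁) hk
    rw [Equiv.swap_apply_self] at h2
    have h1 := Theta_pA_l0 i j h τ₁ l₁ b₁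
    rw [heq, h2] at h1
    cases b₁
    · simp only [Bool.false_eq_true, if_false] at h1
      exact emb_ne_left i j h _ h1
    · simp only [if_true] at h1
      exact emb_ne_right i j h _ h1
  subst hl
  have hb : b₁ = b₂ := by
    have h1 := Theta_pA_l0 i j h τ₁ l₁ b₁
    have h2 := Theta_pA_l0 i j h τ₂ l₁ b₂
    rw [heq, h2] at h1
    cases b₁ <;> cases b₂ <;> simp only [Bool.false_eq_true, if_false, if_true] at h1
    · rfl
    · exact absurd h1.symm h
    · exact absurd h1 h
    · rfl
  subst hb
  have hext : extPerm τ₁ = extPerm τ₂ := by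
    have heq' : rho i j h * extPerm τ₁ * wPerm b₁ * sigmaPerm l₁ =
        rho i j h * extPerm τ₂ * wPerm b₁ * sigmaPerm l₁ := heq
    exact mul_left_cancel (mul_right_cancel (mul_right_cancel heq'))
  have hτ : τ₁ = τ₂ := by
    apply Equiv.ext; intro y
    have happ : extPerm τ₁ (iota y) = extPerm τ₂ (iota y) := by rw [hext]
    rw [extPerm_apply_iota, extPerm_apply_iota] at happ
    exact iota.injective happ
  rw [hτ]

lemma Theta_surjective (i j : Fin (2 * (n + 1))) (h : i ≠ j)
    (π : Equiv.Perm (Fin (2 * (n + 1)))) (l₀ : Fin (n + 1)) (bb : Bool)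
    (hA : π (pA l₀) = if bb then j else i) (hB : π (pB l₀) = if bb then i else j) :
    ∃ x, Theta i j h x = π := by
  have hσA : sigmaPerm l₀ (pA (Fin.last n) : Fin (2 * (n + 1))) = pA l₀ := by
    rw [sigma_pA, Equiv.swap_apply_right]
  have hσB : sigmaPerm l₀ (pB (Fin.last n) : Fin (2 * (n + 1))) = pB l₀ := by
    rw [sigma_pB, Equiv.swap_apply_right]
  set ψ : Equiv.Perm (Fin (2 * (n + 1))) :=
    (rho i j h)⁻¹ * π * (sigmaPerm l₀)⁻¹ * (wPerm bb)⁻¹ with hψdef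
  have hψA : ψ (pA (Fin.last n)) = pA (Fin.last n) := by
    rw [hψdef]
    simp only [sigma_inv, wPerm_inv, Equiv.Perm.mul_apply]
    rw [w_pA_last]
    cases bb
    · simp only [Bool.false_eq_true, if_false]
      rw [hσA, hA]
      simp only [Bool.false_eq_true, if_false]
      rw [Equiv.Perm.inv_eq_iff_eq, rho_apply_pA_last i j h]
    · simp only [if_true]
      rw [hσB, hB]
      simp only [if_true]
      rw [Equiv.Perm.inv_eq_iff_eq, rho_apply_pA_last i j h]
  have hψB : ψ (pB (Fin.last n)) = pB (Fin.last n) := by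
    rw [hψdef]
    simp only [sigma_inv, wPerm_inv, Equiv.Perm.mul_apply]
    rw [w_pB_last]
    cases bb
    · simp only [Bool.false_eq_true, if_false]
      rw [hσB, hB]
      simp only [Bool.false_eq_true, if_false]
      rw [Equiv.Perm.inv_eq_iff_eq, rho_apply_pB_last i j h]
    · simp only [if_true]
      rw [hσA, hA]
      simp only [if_true]
      rw [Equiv.Perm.inv_eq_iff_eq, rho_apply_pB_last i j h]
  have hlow : ∀ z : Fin (2 * (n + 1)), (z : ℕ) < 2 * n → ((ψ z : Fin (2 * (n + 1))) : ℕ) < 2 * n := by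
    intro z hz
    have hne1 : ψ z ≠ pA (Fin.last n) := by
      intro hc
      have h2 := ψ.injective (hc.trans hψA.symm)
      rw [h2, pA_last_val] at hz
      omega
    have hne2 : ψ z ≠ pB (Fin.last n) := by
      intro hc
      have h2 := ψ.injective (hc.trans hψB.symm)
      rw [h2, pB_last_val] at hz
      omega
    have e1 : ((ψ z : Fin (2 * (n + 1))) : ℕ) ≠ 2 * n := fun hc =>
      hne1 (Fin.ext (by rw [hc, pA_last_val]))
    have e2 : ((ψ z : Fin (2 * (n + 1))) : ℕ) ≠ 2 * n + 1 := fun hc =>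
      hne2 (Fin.ext (by rw [hc, pB_last_val]))
    have := (ψ z).isLt
    omega
  have hinj : Function.Injective (fun y : Fin (2 * n) =>
      (⟨((ψ (iota y) : Fin (2 * (n + 1))) : ℕ), hlow (iota y) y.isLt⟩ : Fin (2 * n))) := by
    intro y₁ y₂ hy
    simp only [Fin.mk.injEq] at hy
    exact iota.injective (ψ.injective (Fin.ext hy))
  set τ := Equiv.ofBijective _ (Finite.injective_iff_bijective.mp hinj) with hτdef
  have hext : extPerm τ = ψ := by
    apply Equiv.ext; intro z
    by_cases hz : (z : ℕ) < 2 * n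
    · have hz' : z = iota (⟨(z : ℕ), hz⟩ : Fin (2 * n)) := Fin.ext rfl
      rw [hz', extPerm_apply_iota]
      apply Fin.ext
      rw [iota_val]
      rfl
    · rw [extPerm_apply_high _ _ hz]
      have hz2 := z.isLt
      rcases (by omega : (z : ℕ) = 2 * n ∨ (z : ℕ) = 2 * n + 1) with hcase | hcase
      · have hzz : z = pA (Fin.last n) := Fin.ext (by rw [hcase, pA_last_val])
        rw [hzz, hψA]
      · have hzz : z = pB (Fin.last n) := Fin.ext (by rw [hcase, pB_last_val])
        rw [hzz, hψB]
  refine ⟨(τ, l₀, bb), ?_⟩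
  show rho i j h * extPerm τ * wPerm bb * sigmaPerm l₀ = π
  rw [hext, hψdef]
  group

lemma prod_Theta (M' : Matrix (Fin (2 * (n + 1))) (Fin (2 * (n + 1))) ℝ)
    (i j : Fin (2 * (n + 1))) (h : i ≠ j) (τ : Equiv.Perm (Fin (2 * n)))
    (l₀ : Fin (n + 1)) (bb : Bool) :
    (∏ l : Fin (n + 1), Nmat M' i j 1 (Theta i j h (τ, l₀, bb) (pA l))
        (Theta i j h (τ, l₀, bb) (pB l))) =
      (if bb then (-1 : ℝ) else 1) *
        ∏ l' : Fin n, Nmat M' i j 1 (emb i j h (τ (pA l'))) (emb i j h (τ (pB l'))) := by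
  rw [← Equiv.prod_comp (Equiv.swap l₀ (Fin.last n))
    (fun l => Nmat M' i j 1 (Theta i j h (τ, l₀, bb) (pA l)) (Theta i j h (τ, l₀, bb) (pB l)))]
  rw [Fin.prod_univ_castSucc]
  have hlast : Nmat M' i j 1
      (Theta i j h (τ, l₀, bb) (pA (Equiv.swap l₀ (Fin.last n) (Fin.last n))))
      (Theta i j h (τ, l₀, bb) (pB (Equiv.swap l₀ (Fin.last n) (Fin.last n)))) =
      (if bb then (-1 : ℝ) else 1) := by
    rw [Equiv.swap_apply_right, Theta_pA_l0, Theta_pB_l0]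
    cases bb
    · simp only [Bool.false_eq_true, if_false]
      rw [Nmat_ij]
    · simp only [if_true]
      rw [Nmat_ji M' h]
  have hfac : ∀ l' : Fin n, Nmat M' i j 1
      (Theta i j h (τ, l₀, bb) (pA (Equiv.swap l₀ (Fin.last n) (Fin.castSucc l'))))
      (Theta i j h (τ, l₀, bb) (pB (Equiv.swap l₀ (Fin.last n) (Fin.castSucc l')))) =
      Nmat M' i j 1 (emb i j h (τ (pA l'))) (emb i j h (τ (pB l'))) := by
    intro l'
    have hne : Fin.castSucc l' ≠ Fin.last n := (Fin.castSucc_lt_last l').ne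
    rw [Theta_pA_swap i j h τ l₀ bb _ hne, Theta_pB_swap i j h τ l₀ bb _ hne,
      Fin.castPred_castSucc]
  rw [Finset.prod_congr rfl (fun l' _ => hfac l'), hlast]
  ring

lemma pf_diff (M' : Matrix (Fin (2 * (n + 1))) (Fin (2 * (n + 1))) ℝ)
    {i j : Fin (2 * (n + 1))} (hij : i ≠ j) :
    ∃ s : ℝ, |s| = 1 ∧
      pfaffian (Nmat M' i j 1) - pfaffian (Nmat M' i j 0) =
        s * pfMinor M' i j hij := by
  classical
  refine ⟨((Equiv.Perm.sign (rho i j hij) : ℤ) : ℝ), ?_, ?_⟩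
  · rcases Int.units_eq_one_or (Equiv.Perm.sign (rho i j hij)) with hs | hs <;>
      rw [hs] <;> norm_num
  rw [pfaffian_eq, pfaffian_eq, ← mul_sub, ← Finset.sum_sub_distrib]
  set Q : Equiv.Perm (Fin (2 * (n + 1))) → Prop := fun π =>
    ∃ l₀ : Fin (n + 1), (π (pA l₀) = i ∧ π (pB l₀) = j) ∨
      (π (pA l₀) = j ∧ π (pB l₀) = i) with hQ
  have h0 : ∀ π : Equiv.Perm (Fin (2 * (n + 1))), ¬ Q π →
      (∏ l : Fin (n + 1), Nmat M' i j 1 (π (pA l)) (π (pB l))) =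
        ∏ l : Fin (n + 1), Nmat M' i j 0 (π (pA l)) (π (pB l)) := by
    intro π hπ
    refine Finset.prod_congr rfl fun l _ => ?_
    rw [Nmat_other M' (fun hc => hπ ⟨l, Or.inl hc⟩) (fun hc => hπ ⟨l, Or.inr hc⟩),
      Nmat_other M' (fun hc => hπ ⟨l, Or.inl hc⟩) (fun hc => hπ ⟨l, Or.inr hc⟩)]
  have hP0 : ∀ π : Equiv.Perm (Fin (2 * (n + 1))), Q π →
      (∏ l : Fin (n + 1), Nmat M' i j 0 (π (pA l)) (π (pB l))) = 0 := by
    intro π hπ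
    obtain ⟨l₀, hor⟩ := hπ
    refine Finset.prod_eq_zero (Finset.mem_univ l₀) ?_
    rcases hor with ⟨ha, hb⟩ | ⟨ha, hb⟩
    · rw [ha, hb, Nmat_ij]
    · rw [ha, hb, Nmat_ji M' hij]; norm_num
  have hsplit : (∑ π : Equiv.Perm (Fin (2 * (n + 1))),
      (((Equiv.Perm.sign π : ℤ) : ℝ) * ∏ l : Fin (n + 1), Nmat M' i j 1 (π (pA l)) (π (pB l)) -
        ((Equiv.Perm.sign π : ℤ) : ℝ) * ∏ l : Fin (n + 1), Nmat M' i j 0 (π (pA l)) (π (pB l)))) =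
      ∑ π ∈ Finset.univ.filter Q, ((Equiv.Perm.sign π : ℤ) : ℝ) *
        ∏ l : Fin (n + 1), Nmat M' i j 1 (π (pA l)) (π (pB l)) := by
    rw [← Finset.sum_filter_add_sum_filter_not Finset.univ Q]
    rw [Finset.sum_eq_zero (s := Finset.univ.filter (fun π => ¬ Q π))
      (fun π hπ => by rw [h0 π (Finset.mem_filter.mp hπ).2]; ring), add_zero]
    refine Finset.sum_congr rfl fun π hπ => ?_
    rw [hP0 π (Finset.mem_filter.mp hπ).2]
    ring
  rw [hsplit]
  have hbij : (∑ π ∈ Finset.univ.filter Q, ((Equiv.Perm.sign π : ℤ) : ℝ) *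
      ∏ l : Fin (n + 1), Nmat M' i j 1 (π (pA l)) (π (pB l))) =
      ∑ x : Equiv.Perm (Fin (2 * n)) × Fin (n + 1) × Bool,
        ((Equiv.Perm.sign (Theta i j hij x) : ℤ) : ℝ) *
          ∏ l : Fin (n + 1), Nmat M' i j 1 (Theta i j hij x (pA l)) (Theta i j hij x (pB l)) := by
    refine (Finset.sum_bij (fun x _ => Theta i j hij x) ?_ ?_ ?_ ?_).symm
    · rintro ⟨τ, l₀, bb⟩ -
      refine Finset.mem_filter.mpr ⟨Finset.mem_univ _, ⟨l₀, ?_⟩⟩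
      cases bb
      · exact Or.inl ⟨Theta_pA_l0 i j hij τ l₀ false, Theta_pB_l0 i j hij τ l₀ false⟩
      · exact Or.inr ⟨Theta_pA_l0 i j hij τ l₀ true, Theta_pB_l0 i j hij τ l₀ true⟩
    · intro x₁ _ x₂ _ hx
      exact Theta_injective i j hij hx
    · intro π hπ
      obtain ⟨l₀, hor⟩ := (Finset.mem_filter.mp hπ).2
      rcases hor with ⟨ha, hb⟩ | ⟨ha, hb⟩
      · obtain ⟨x, hx⟩ := Theta_surjective i j hij π l₀ false (by simpa using ha)
          (by simpa using hb)
        exact ⟨x, Finset.mem_univ x, hx⟩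
      · obtain ⟨x, hx⟩ := Theta_surjective i j hij π l₀ true (by simpa using ha)
          (by simpa using hb)
        exact ⟨x, Finset.mem_univ x, hx⟩
    · intro x _
      rfl
  rw [hbij]
  have hterm : ∀ x : Equiv.Perm (Fin (2 * n)) × Fin (n + 1) × Bool,
      ((Equiv.Perm.sign (Theta i j hij x) : ℤ) : ℝ) *
        (∏ l : Fin (n + 1), Nmat M' i j 1 (Theta i j hij x (pA l)) (Theta i j hij x (pB l))) =
      ((Equiv.Perm.sign (rho i j hij) : ℤ) : ℝ) * ((Equiv.Perm.sign x.1 : ℤ) : ℝ) *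
        ∏ l' : Fin n, Nmat M' i j 1 (emb i j hij (x.1 (pA l'))) (emb i j hij (x.1 (pB l'))) := by
    rintro ⟨τ, l₀, bb⟩
    rw [sign_Theta, prod_Theta]
    cases bb <;> simp <;> ring
  rw [Finset.sum_congr rfl (fun x _ => hterm x)]
  rw [Fintype.sum_prod_type]
  have hconst : ∀ τ : Equiv.Perm (Fin (2 * n)),
      (∑ _p : Fin (n + 1) × Bool, ((Equiv.Perm.sign (rho i j hij) : ℤ) : ℝ) *
        ((Equiv.Perm.sign τ : ℤ) : ℝ) *
          ∏ l' : Fin n, Nmat M' i j 1 (emb i j hij (τ (pA l'))) (emb i j hij (τ (pB l')))) =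
      (2 * (n + 1) : ℝ) * (((Equiv.Perm.sign (rho i j hij) : ℤ) : ℝ) *
        (((Equiv.Perm.sign τ : ℤ) : ℝ) *
          ∏ l' : Fin n, Nmat M' i j 1 (emb i j hij (τ (pA l'))) (emb i j hij (τ (pB l'))))) := by
    intro τ
    rw [Finset.sum_const, Finset.card_univ, Fintype.card_prod, Fintype.card_fin,
      Fintype.card_bool, nsmul_eq_mul]
    push_cast
    ring
  rw [Finset.sum_congr rfl (fun τ _ => hconst τ)]
  rw [← Finset.mul_sum, ← Finset.mul_sum]
  have hminor : pfMinor M' i j hij = (1 / (2 ^ n * (n.factorial : ℝ))) *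
      ∑ τ : Equiv.Perm (Fin (2 * n)), ((Equiv.Perm.sign τ : ℤ) : ℝ) *
        ∏ l' : Fin n, Nmat M' i j 1 (emb i j hij (τ (pA l'))) (emb i j hij (τ (pB l'))) := by
    rw [pfMinor, pfaffian_eq]
    congr 1
    refine Finset.sum_congr rfl fun τ _ => ?_
    congr 1
    refine Finset.prod_congr rfl fun l' _ => ?_
    rw [Matrix.of_apply]
    rw [Nmat_other M'
      (fun hc => emb_ne_left i j hij (τ (pA l')) hc.1)
      (fun hc => emb_ne_right i j hij (τ (pA l')) hc.1)]
    rfl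
  rw [hminor]
  have hfac : ((n + 1).factorial : ℝ) = (n + 1) * (n.factorial : ℝ) := by
    rw [Nat.factorial_succ]; push_cast; ring
  have h1 : (n.factorial : ℝ) ≠ 0 := Nat.cast_ne_zero.mpr n.factorial_ne_zero
  have h2 : (2 : ℝ) ^ n ≠ 0 := pow_ne_zero n two_ne_zero
  have h3 : ((n : ℝ) + 1) ≠ 0 := by positivity
  rw [hfac]
  field_simp [hfac]
  ring

lemma Nmat_self (M' : Matrix (Fin (2 * (n + 1))) (Fin (2 * (n + 1))) ℝ)
    {i j : Fin (2 * (n + 1))} (hskew : M' j i = -(M' i j)) :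
    M' = Nmat M' i j (M' i j) := by
  funext k l
  unfold Nmat
  by_cases hc1 : k = i ∧ l = j
  · rw [if_pos hc1, hc1.1, hc1.2]
  · rw [if_neg hc1]
    by_cases hc2 : k = j ∧ l = i
    · rw [if_pos hc2, hc2.1, hc2.2, hskew]
    · rw [if_neg hc2]

lemma pf_sub_eq (M M' : Matrix (Fin (2 * (n + 1))) (Fin (2 * (n + 1))) ℝ)
    {i j : Fin (2 * (n + 1))} (hij : i ≠ j)
    (h1 : M = Nmat M' i j (M i j)) (h2 : M' = Nmat M' i j (M' i j)) :
    |pfaffian M - pfaffian M'| = |M i j - M' i j| * |pfMinor M' i j hij| := by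
  obtain ⟨s, hs, hD⟩ := pf_diff M' hij
  have hM : pfaffian M = pfaffian (Nmat M' i j 0) +
      (M i j) * (pfaffian (Nmat M' i j 1) - pfaffian (Nmat M' i j 0)) := by
    conv_lhs => rw [h1]
    exact pf_Nmat_affine M' hij _
  have hM' : pfaffian M' = pfaffian (Nmat M' i j 0) +
      (M' i j) * (pfaffian (Nmat M' i j 1) - pfaffian (Nmat M' i j 0)) := by
    conv_lhs => rw [h2]
    exact pf_Nmat_affine M' hij _
  rw [hM, hM', hD]
  have he : pfaffian (Nmat M' i j 0) + M i j * (s * pfMinor M' i j hij) -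
      (pfaffian (Nmat M' i j 0) + M' i j * (s * pfMinor M' i j hij)) =
      ((M i j - M' i j) * s) * pfMinor M' i j hij := by ring
  rw [he, abs_mul, abs_mul, hs, mul_one]

/-- interpolating matrix with natural-number thresholds; entries `(k,l)` with `k < l`
lexicographically strictly before `(p,q)` come from `A`, the rest from `B`. -/
def Jmat (A B : Matrix (Fin (2 * (n + 1))) (Fin (2 * (n + 1))) ℝ) (p q : ℕ) :
    Matrix (Fin (2 * (n + 1))) (Fin (2 * (n + 1))) ℝ := fun k l =>
  if k < l then (if (k : ℕ) < p ∨ ((k : ℕ) = p ∧ (l : ℕ) < q) then A k l else B k l)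
  else if l < k then -(if (l : ℕ) < p ∨ ((l : ℕ) = p ∧ (k : ℕ) < q) then A l k else B l k)
  else 0

variable {A B : Matrix (Fin (2 * (n + 1))) (Fin (2 * (n + 1))) ℝ}

lemma Jmat_congr {p q p' q' : ℕ}
    (h : ∀ a b : ℕ, a < b → b < 2 * (n + 1) →
      ((a < p ∨ (a = p ∧ b < q)) ↔ (a < p' ∨ (a = p' ∧ b < q')))) :
    Jmat A B p q = Jmat A B p' q' := by
  funext k l
  unfold Jmat
  by_cases hkl : k < l
  · rw [if_pos hkl, if_pos hkl,
      if_congr (h (k : ℕ) (l : ℕ) (Fin.lt_def.mp hkl) l.isLt) rfl rfl]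
  · rw [if_neg hkl, if_neg hkl]
    by_cases hlk : l < k
    · rw [if_pos hlk, if_pos hlk,
        if_congr (h (l : ℕ) (k : ℕ) (Fin.lt_def.mp hlk) k.isLt) rfl rfl]
    · rw [if_neg hlk, if_neg hlk]

lemma Jmat_zero (hB : Bᵀ = -B) : Jmat A B 0 0 = B := by
  have hskew : ∀ k l : Fin (2 * (n + 1)), B l k = -(B k l) := by
    intro k l
    have := congrFun (congrFun hB k) l
    rwa [Matrix.transpose_apply, Matrix.neg_apply] at this
  have hdiag : ∀ k : Fin (2 * (n + 1)), B k k = 0 := by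
    intro k
    have := hskew k k
    linarith
  funext k l
  unfold Jmat
  rcases lt_trichotomy k l with h | h | h
  · rw [if_pos h, if_neg (by omega)]
  · rw [if_neg (by rw [h]; exact lt_irrefl l), if_neg (by rw [h]; exact lt_irrefl l), h, hdiag]
  · rw [if_neg (asymm h), if_pos h, if_neg (by omega), hskew, neg_neg]

lemma Jmat_top (hA : Aᵀ = -A) : Jmat A B (2 * (n + 1)) 0 = A := by
  have hskew : ∀ k l : Fin (2 * (n + 1)), A l k = -(A k l) := by
    intro k l
    have := congrFun (congrFun hA k) l
    rwa [Matrix.transpose_apply, Matrix.neg_apply] at this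
  have hdiag : ∀ k : Fin (2 * (n + 1)), A k k = 0 := by
    intro k
    have := hskew k k
    linarith
  funext k l
  unfold Jmat
  rcases lt_trichotomy k l with h | h | h
  · rw [if_pos h, if_pos (Or.inl k.isLt)]
  · rw [if_neg (by rw [h]; exact lt_irrefl l), if_neg (by rw [h]; exact lt_irrefl l), h, hdiag]
  · rw [if_neg (asymm h), if_pos h, if_pos (Or.inl l.isLt), hskew, neg_neg]

lemma Jmat_wrap (p : ℕ) : Jmat A B p (2 * (n + 1)) = Jmat A B (p + 1) 0 :=
  Jmat_congr fun a b hab hb => by omega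

lemma Jmat_stall {p q : ℕ} (hpq : ¬ p < q) : Jmat A B p (q + 1) = Jmat A B p q :=
  Jmat_congr fun a b hab hb => by omega

lemma Jmat_skew (p q : ℕ) {k l : Fin (2 * (n + 1))} (hkl : k < l) :
    Jmat A B p q l k = -(Jmat A B p q k l) := by
  unfold Jmat
  rw [if_neg (asymm hkl), if_pos hkl, if_pos hkl]

lemma Jmat_interp (i j : Fin (2 * (n + 1))) :
    Jmat A B (i : ℕ) ((j : ℕ) + 1) = interp A B i j := by
  have hiff : ∀ a b : Fin (2 * (n + 1)),
      (((a : ℕ) < (i : ℕ) ∨ ((a : ℕ) = (i : ℕ) ∧ (b : ℕ) < (j : ℕ) + 1)) ↔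
        (a < i ∨ (a = i ∧ b ≤ j))) := by
    intro a b
    rw [Fin.lt_def, Fin.le_def, Fin.ext_iff]
    omega
  funext k l
  unfold Jmat interp
  by_cases hkl : k < l
  · rw [if_pos hkl, if_pos hkl, if_congr (hiff k l) rfl rfl]
  · rw [if_neg hkl, if_neg hkl]
    by_cases hlk : l < k
    · rw [if_pos hlk, if_pos hlk, if_congr (hiff l k) rfl rfl]
    · rw [if_neg hlk, if_neg hlk]

lemma Jmat_step {i j : Fin (2 * (n + 1))} (hij : i < j) :
    Jmat A B (i : ℕ) ((j : ℕ) + 1) =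
      Nmat (Jmat A B (i : ℕ) (j : ℕ)) i j (Jmat A B (i : ℕ) ((j : ℕ) + 1) i j) := by
  funext k l
  unfold Nmat
  by_cases hc1 : k = i ∧ l = j
  · rw [if_pos hc1, hc1.1, hc1.2]
  · rw [if_neg hc1]
    by_cases hc2 : k = j ∧ l = i
    · rw [if_pos hc2, hc2.1, hc2.2, Jmat_skew _ _ hij]
    · rw [if_neg hc2]
      have hne1 : ¬((k : ℕ) = (i : ℕ) ∧ (l : ℕ) = (j : ℕ)) := by
        intro hc
        exact hc1 ⟨Fin.ext hc.1, Fin.ext hc.2⟩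
      have hne2 : ¬((l : ℕ) = (i : ℕ) ∧ (k : ℕ) = (j : ℕ)) := by
        intro hc
        exact hc2 ⟨Fin.ext hc.2, Fin.ext hc.1⟩
      unfold Jmat
      have hc3 : ((k : ℕ) < (i : ℕ) ∨ ((k : ℕ) = (i : ℕ) ∧ (l : ℕ) < (j : ℕ) + 1)) ↔
          ((k : ℕ) < (i : ℕ) ∨ ((k : ℕ) = (i : ℕ) ∧ (l : ℕ) < (j : ℕ))) := by omega
      have hc4 : ((l : ℕ) < (i : ℕ) ∨ ((l : ℕ) = (i : ℕ) ∧ (k : ℕ) < (j : ℕ) + 1)) ↔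
          ((l : ℕ) < (i : ℕ) ∨ ((l : ℕ) = (i : ℕ) ∧ (k : ℕ) < (j : ℕ))) := by omega
      by_cases hkl : k < l
      · rw [if_pos hkl, if_pos hkl, if_congr hc3 rfl rfl]
      · rw [if_neg hkl, if_neg hkl]
        by_cases hlk : l < k
        · rw [if_pos hlk, if_pos hlk, if_congr hc4 rfl rfl]
        · rw [if_neg hlk, if_neg hlk]

lemma Jmat_entry_top {i j : Fin (2 * (n + 1))} (hij : i < j) :
    Jmat A B (i : ℕ) ((j : ℕ) + 1) i j = A i j := by
  unfold Jmat
  rw [if_pos hij, if_pos (Or.inr ⟨rfl, by omega⟩)]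

lemma Jmat_entry_bot {i j : Fin (2 * (n + 1))} (hij : i < j) :
    Jmat A B (i : ℕ) (j : ℕ) i j = B i j := by
  unfold Jmat
  rw [if_pos hij, if_neg (by omega)]

lemma pfMinor_congr {i j : Fin (2 * (n + 1))} (hne : i ≠ j)
    (M₁ M₂ : Matrix (Fin (2 * (n + 1))) (Fin (2 * (n + 1))) ℝ)
    (h : ∀ k l : Fin (2 * (n + 1)), k ≠ i → k ≠ j → l ≠ i → l ≠ j → M₁ k l = M₂ k l) :
    pfMinor M₁ i j hne = pfMinor M₂ i j hne := by
  unfold pfMinor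
  congr 1
  ext a b
  simp only [Matrix.of_apply]
  exact h _ _ (emb_ne_left i j hne a) (emb_ne_right i j hne a)
    (emb_ne_left i j hne b) (emb_ne_right i j hne b)

end PfTele

/-- Telescoping bound for a difference of Pfaffians: for antisymmetric `A`, `B`,
`|Pf A − Pf B| ≤ ∑_{i<j} |A_{i,j} − B_{i,j}| · |Pf(M^{(i,j)}_{îĵ})|`, where `M^{(i,j)}`
is the interpolating antisymmetric matrix whose above-diagonal entries agree with `A`
for indices lexicographically `≤ (i,j)` and with `B` afterwards, and `M^{(i,j)}_{îĵ}`
is obtained by deleting rows and columns `i` and `j`. -/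
theorem pfaffian_telescoping {n : ℕ}
    (A B : Matrix (Fin (2 * (n + 1))) (Fin (2 * (n + 1))) ℝ)
    (hA : Aᵀ = -A) (hB : Bᵀ = -B) :
    |pfaffian A - pfaffian B| ≤
      ∑ i : Fin (2 * (n + 1)), ∑ j : Fin (2 * (n + 1)),
        if h : i < j then
          |A i j - B i j| * |pfMinor (interp A B i j) i j h.ne|
        else 0 := by
  classical
  have tele : pfaffian A - pfaffian B =
      ∑ p ∈ Finset.range (2 * (n + 1)), ∑ q ∈ Finset.range (2 * (n + 1)),
        (pfaffian (PfTele.Jmat A B p (q + 1)) - pfaffian (PfTele.Jmat A B p q)) := by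
    have inner : ∀ p : ℕ, (∑ q ∈ Finset.range (2 * (n + 1)),
        (pfaffian (PfTele.Jmat A B p (q + 1)) - pfaffian (PfTele.Jmat A B p q))) =
        pfaffian (PfTele.Jmat A B p (2 * (n + 1))) - pfaffian (PfTele.Jmat A B p 0) :=
      fun p => Finset.sum_range_sub (fun q => pfaffian (PfTele.Jmat A B p q)) (2 * (n + 1))
    rw [Finset.sum_congr rfl fun p _ => inner p]
    have step : ∀ p : ℕ,
        pfaffian (PfTele.Jmat A B p (2 * (n + 1))) - pfaffian (PfTele.Jmat A B p 0) =
        pfaffian (PfTele.Jmat A B (p + 1) 0) - pfaffian (PfTele.Jmat A B p 0) := fun p => by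
      rw [PfTele.Jmat_wrap]
    rw [Finset.sum_congr rfl fun p _ => step p,
      Finset.sum_range_sub (fun p => pfaffian (PfTele.Jmat A B p 0)) (2 * (n + 1)),
      PfTele.Jmat_top hA, PfTele.Jmat_zero hB]
  have hle : |pfaffian A - pfaffian B| ≤
      ∑ p ∈ Finset.range (2 * (n + 1)), ∑ q ∈ Finset.range (2 * (n + 1)),
        |pfaffian (PfTele.Jmat A B p (q + 1)) - pfaffian (PfTele.Jmat A B p q)| := by
    rw [tele]
    exact le_trans (Finset.abs_sum_le_sum_abs _ _)
      (Finset.sum_le_sum fun p _ => Finset.abs_sum_le_sum_abs _ _)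
  refine le_trans hle (le_of_eq ?_)
  rw [← Fin.sum_univ_eq_sum_range (fun p => ∑ q ∈ Finset.range (2 * (n + 1)),
    |pfaffian (PfTele.Jmat A B p (q + 1)) - pfaffian (PfTele.Jmat A B p q)|) (2 * (n + 1))]
  refine Finset.sum_congr rfl fun i _ => ?_
  rw [← Fin.sum_univ_eq_sum_range (fun q =>
    |pfaffian (PfTele.Jmat A B (i : ℕ) (q + 1)) - pfaffian (PfTele.Jmat A B (i : ℕ) q)|)
    (2 * (n + 1))]
  refine Finset.sum_congr rfl fun j _ => ?_
  by_cases hij : i < j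
  · rw [dif_pos hij]
    have h1 := PfTele.Jmat_step (A := A) (B := B) hij
    have h2 : PfTele.Jmat A B (i : ℕ) (j : ℕ) =
        PfTele.Nmat (PfTele.Jmat A B (i : ℕ) (j : ℕ)) i j
          (PfTele.Jmat A B (i : ℕ) (j : ℕ) i j) :=
      PfTele.Nmat_self _ (PfTele.Jmat_skew _ _ hij)
    have key := PfTele.pf_sub_eq (PfTele.Jmat A B (i : ℕ) ((j : ℕ) + 1))
      (PfTele.Jmat A B (i : ℕ) (j : ℕ)) hij.ne h1 h2
    rw [key, PfTele.Jmat_entry_top hij, PfTele.Jmat_entry_bot hij]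
    congr 2
    refine PfTele.pfMinor_congr hij.ne _ _ fun k l hk1 hk2 hl1 hl2 => ?_
    rw [← PfTele.Jmat_interp i j, h1,
      PfTele.Nmat_other _ (fun hc => hk1 hc.1) (fun hc => hk2 hc.1)]
  · rw [dif_neg hij, PfTele.Jmat_stall (fun hc => hij (Fin.lt_def.mpr hc)), sub_self, abs_zero]
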